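/- A strongly connected directed graph G with nonnegative arc costs is ξ-min-balanced (every arc e lies on a directed cycle C with c(f) ≤ ξ·c(e) for all f ∈ C) if and only if for every nonempty proper subset S of nodes, the minimum cost of an arc entering S is at most ξ times the minimum cost of an arc leaving S. -/

import Mathlib

open scoped Classical

variable {V : Type*}

/-- `IsWalk A u v l`: `u :: l` is a directed walk from `u` to `v` in the digraph with
arc relation `A`. -/
def IsWalk (A : V → V → Prop) (u v : V) (l : List V) : Prop :=
  List.Chain A u l ∧ (u :: l).getLast (List.cons_ne_nil u l) = v

/-- The list of arcs of the walk `u :: l`. -/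
def walkArcs (u : V) (l : List V) : List (V × V) := (u :: l).zip l

/-- The cost of a walk: the sum of the costs of its arcs. -/
noncomputable def walkCost (c : V → V → ℝ) (u : V) (l : List V) : ℝ :=
  ((walkArcs u l).map fun e => c e.1 e.2).sum

/-- A (simple) directed cycle through the arc `(x, y)`: the arc `(x, y)` together with a
walk from `y` back to `x` visiting pairwise distinct nodes. -/
def IsCycleThrough (A : V → V → Prop) (x y : V) (l : List V) : Prop :=
  A x y ∧ IsWalk A y x l ∧ (y :: l).Nodup

/-- The arcs of the cycle through `(x, y)` given by the return walk `y :: l`. -/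
def cycleArcs (x y : V) (l : List V) : List (V × V) := (x, y) :: walkArcs y l

/-- `G = (V, A, c)` is `ξ`-min-balanced: every arc lies on a directed cycle all of whose
arcs have cost at most `ξ` times the cost of the given arc. -/
def MinBalanced (A : V → V → Prop) (c : V → V → ℝ) (ξ : ℝ) : Prop :=
  ∀ x y, A x y → ∃ l, IsCycleThrough A x y l ∧
    ∀ f ∈ cycleArcs x y l, c f.1 f.2 ≤ ξ * c x y

/-- A digraph is strongly connected if there is a directed walk between any two nodes. -/
def StronglyConnected (A : V → V → Prop) : Prop := ∀ u v : V, ∃ l, IsWalk A u v l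

/-- The bottleneck cost `b(i,j)`: the least `t` such that there is a directed `i`–`j`
walk all of whose arcs have cost at most `t`. -/
noncomputable def bottleneck (A : V → V → Prop) (c : V → V → ℝ) (i j : V) : ℝ :=
  sInf {t | ∃ l, IsWalk A i j l ∧ ∀ f ∈ walkArcs i l, c f.1 f.2 ≤ t}

/-- The balance value `β(e)` of the arc `e = (x, y)`: the smallest `r` such that there is
a directed cycle through `e` all of whose arcs have cost at most `r`. -/
noncomputable def balanceValue (A : V → V → Prop) (c : V → V → ℝ) (x y : V) : ℝ :=
  sInf {r | ∃ l, IsCycleThrough A x y l ∧ ∀ f ∈ cycleArcs x y l, c f.1 f.2 ≤ r}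


section Aux

lemma isWalk_nil' {A : V → V → Prop} (u : V) : IsWalk A u u [] := ⟨List.Chain.nil, rfl⟩

lemma walkArcs_nil' (u : V) : walkArcs u ([] : List V) = [] := rfl

lemma walkArcs_cons' (u b : V) (l : List V) :
    walkArcs u (b :: l) = (u, b) :: walkArcs b l := rfl

lemma isWalk_cons' {A : V → V → Prop} {u b v : V} {l : List V} :
    IsWalk A u v (b :: l) ↔ A u b ∧ IsWalk A b v l := by
  unfold IsWalk
  rw [List.Chain, List.chain_cons, List.getLast_cons (List.cons_ne_nil b l)]
  tauto

lemma walk_cross {A : V → V → Prop} {S : Set V} :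
    ∀ (l : List V) (u v : V), IsWalk A u v l → u ∈ S → v ∉ S →
      ∃ a b, (a, b) ∈ walkArcs u l ∧ a ∈ S ∧ b ∉ S ∧ A a b := by
  intro l
  induction l with
  | nil => intro u v hw hu hv; obtain ⟨-, h⟩ := hw; simp at h; subst h; exact absurd hu hv
  | cons b t ih =>
    intro u v hw hu hv
    obtain ⟨hab, hw'⟩ := isWalk_cons'.mp hw
    by_cases hb : b ∈ S
    · obtain ⟨a', b', hm, h1, h2, h3⟩ := ih b v hw' hb hv
      exact ⟨a', b', by simp [walkArcs_cons', hm], h1, h2, h3⟩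
    · exact ⟨u, b, by simp [walkArcs_cons'], hu, hb, hab⟩

lemma walk_append {A : V → V → Prop} :
    ∀ (l : List V) (u v w : V), IsWalk A u v l → A v w →
      IsWalk A u w (l ++ [w]) ∧
      ∀ f ∈ walkArcs u (l ++ [w]), f ∈ walkArcs u l ∨ f = (v, w) := by
  intro l
  induction l with
  | nil =>
    intro u v w hw ha
    obtain ⟨-, h⟩ := hw; simp at h; subst h
    refine ⟨isWalk_cons'.mpr ⟨ha, isWalk_nil' w⟩, ?_⟩
    intro f hf
    simp only [List.nil_append, walkArcs_cons', List.mem_cons, walkArcs_nil',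
      List.not_mem_nil, or_false] at hf
    simp [hf]
  | cons b t ih =>
    intro u v w hw ha
    obtain ⟨hab, hw'⟩ := isWalk_cons'.mp hw
    obtain ⟨hw2, harcs⟩ := ih b v w hw' ha
    refine ⟨isWalk_cons'.mpr ⟨hab, hw2⟩, ?_⟩
    intro f hf
    simp only [List.cons_append, walkArcs_cons', List.mem_cons] at hf ⊢
    rcases hf with h | h
    · exact Or.inl (Or.inl h)
    · rcases harcs f h with h' | h'
      · exact Or.inl (Or.inr h')
      · exact Or.inr h'

lemma walk_prefix {A : V → V → Prop} :
    ∀ (l : List V) (u v w : V), IsWalk A u v l → w ∈ u :: l →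
      ∃ l', IsWalk A u w l' ∧ l' <+: l ∧ ∀ f ∈ walkArcs u l', f ∈ walkArcs u l := by
  intro l
  induction l with
  | nil =>
    intro u v w hw hm
    simp only [List.mem_singleton, List.not_mem_nil, or_false, List.mem_cons] at hm
    subst hm
    exact ⟨[], isWalk_nil' _, List.prefix_rfl, by simp⟩
  | cons b t ih =>
    intro u v w hw hm
    by_cases huw : w = u
    · subst huw; exact ⟨[], isWalk_nil' _, List.nil_prefix, by simp [walkArcs]⟩
    · obtain ⟨hab, hw'⟩ := isWalk_cons'.mp hw
      have hm' : w ∈ b :: t := by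
        rcases List.mem_cons.mp hm with h | h
        · exact absurd h huw
        · exact h
      obtain ⟨l'', hw2, hpre, harcs⟩ := ih b v w hw' hm'
      refine ⟨b :: l'', isWalk_cons'.mpr ⟨hab, hw2⟩, ?_, ?_⟩
      · exact (List.prefix_cons_inj b).mpr hpre
      · intro f hf
        simp only [walkArcs_cons', List.mem_cons] at hf ⊢
        rcases hf with h | h
        · exact Or.inl h
        · exact Or.inr (harcs f h)

lemma reach_nodup_walk {A : V → V → Prop} {c : V → V → ℝ} {B : ℝ} {y x : V}
    (h : Relation.ReflTransGen (fun a b => A a b ∧ c a b ≤ B) y x) :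
    ∃ l, IsWalk A y x l ∧ (y :: l).Nodup ∧ ∀ f ∈ walkArcs y l, c f.1 f.2 ≤ B := by
  induction h with
  | refl => exact ⟨[], isWalk_nil' y, List.nodup_singleton y, by simp [walkArcs_nil']⟩
  | @tail b w hyb hbw ih =>
    obtain ⟨l, hw, hnd, hcheap⟩ := ih
    by_cases hmem : w ∈ y :: l
    · obtain ⟨l', hw', hpre, harcs⟩ := walk_prefix l y b w hw hmem
      refine ⟨l', hw', ?_, fun f hf => hcheap f (harcs f hf)⟩
      exact hnd.sublist ((hpre.sublist).cons_cons y)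
    · obtain ⟨hw2, harcs⟩ := walk_append l y b w hw hbw.1
      refine ⟨l ++ [w], hw2, ?_, ?_⟩
      · have heq : (y :: l) ++ [w] = y :: (l ++ [w]) := by simp
        rw [← heq, List.nodup_append]
        exact ⟨hnd, List.nodup_singleton w, by simp at hmem ⊢; exact ⟨fun h => hmem.1 h.symm, fun a ha h => hmem.2 (h ▸ ha)⟩⟩
      · intro f hf
        rcases harcs f hf with h' | h'
        · exact hcheap f h'
        · subst h'; exact hbw.2

end Aux

/-- A strongly connected digraph with nonnegative arc costs is
`ξ`-min-balanced iff for every nonempty proper node subset `S`, the minimum cost of an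
arc entering `S` is at most `ξ` times the minimum cost of an arc leaving `S`. -/
theorem minBalanced_iff_cut_condition [Fintype V] (A : V → V → Prop) (c : V → V → ℝ)
    (hc : ∀ x y, A x y → 0 ≤ c x y) (ξ : ℝ) (hξ : 1 ≤ ξ)
    (hsc : StronglyConnected A) :
    MinBalanced A c ξ ↔
      ∀ S : Set V, S.Nonempty → S ≠ Set.univ →
        sInf {t | ∃ x ∉ S, ∃ y ∈ S, A x y ∧ c x y = t} ≤
          ξ * sInf {t | ∃ x ∈ S, ∃ y ∉ S, A x y ∧ c x y = t} := by
  have key : ∀ s : Set ℝ, s ⊆ Set.range (fun p : V × V => c p.1 p.2) → s.Finite :=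
    fun s hs => (Set.finite_range _).subset hs
  constructor
  · -- forward
    intro hMB S hSne hSuniv
    have houtfin : {t | ∃ x ∈ S, ∃ y ∉ S, A x y ∧ c x y = t}.Finite := by
      apply key; rintro t ⟨a, -, b, -, -, rfl⟩; exact ⟨(a, b), rfl⟩
    have hinfin : {t | ∃ x ∉ S, ∃ y ∈ S, A x y ∧ c x y = t}.Finite := by
      apply key; rintro t ⟨a, -, b, -, -, rfl⟩; exact ⟨(a, b), rfl⟩
    obtain ⟨u, hu⟩ := hSne
    obtain ⟨v, hv⟩ : ∃ v, v ∉ S := by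
      by_contra h; push_neg at h; exact hSuniv (Set.eq_univ_iff_forall.mpr h)
    obtain ⟨l, hl⟩ := hsc u v
    obtain ⟨a, b, hm, haS, hbS, hab⟩ := walk_cross l u v hl hu hv
    have houtne : {t | ∃ x ∈ S, ∃ y ∉ S, A x y ∧ c x y = t}.Nonempty :=
      ⟨c a b, a, haS, b, hbS, hab, rfl⟩
    obtain ⟨x, hxS, y, hyS, hAxy, hcxy⟩ := houtne.csInf_mem houtfin
    obtain ⟨l', hcyc, hcheap⟩ := hMB x y hAxy
    obtain ⟨-, hwalk, -⟩ := hcyc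
    obtain ⟨a', b', hm', ha', hb', hA'⟩ :=
      walk_cross (S := Sᶜ) l' y x hwalk hyS (by simpa using hxS)
    have hle : c a' b' ≤ ξ * c x y := hcheap (a', b') (by simp [cycleArcs, hm'])
    calc sInf {t | ∃ x ∉ S, ∃ y ∈ S, A x y ∧ c x y = t}
        ≤ c a' b' := csInf_le hinfin.bddBelow
          ⟨a', by simpa using ha', b', by simpa using hb', hA', rfl⟩
      _ ≤ ξ * c x y := hle
      _ = ξ * sInf {t | ∃ x ∈ S, ∃ y ∉ S, A x y ∧ c x y = t} := by rw [hcxy]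
  · -- backward
    intro hcut x y hAxy
    have hξ0 : (0:ℝ) ≤ ξ := le_trans zero_le_one hξ
    have hcB : c x y ≤ ξ * c x y := by nlinarith [hc x y hAxy]
    have hxT : Relation.ReflTransGen (fun a b => A a b ∧ c a b ≤ ξ * c x y) y x := by
      by_contra hxT
      set T : Set V := {v | Relation.ReflTransGen (fun a b => A a b ∧ c a b ≤ ξ * c x y) y v}
        with hT
      have hyT : y ∈ T := Relation.ReflTransGen.refl
      have h1 := hcut Tᶜ ⟨x, hxT⟩ (by
        intro h
        exact absurd (h ▸ Set.mem_univ y : y ∈ Tᶜ) (by simpa using hyT))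
      have houtfin : {t | ∃ a ∈ Tᶜ, ∃ b ∉ Tᶜ, A a b ∧ c a b = t}.Finite := by
        apply key; rintro t ⟨a, -, b, -, -, rfl⟩; exact ⟨(a, b), rfl⟩
      have hinfin : {t | ∃ a ∉ Tᶜ, ∃ b ∈ Tᶜ, A a b ∧ c a b = t}.Finite := by
        apply key; rintro t ⟨a, -, b, -, -, rfl⟩; exact ⟨(a, b), rfl⟩
      have hout : sInf {t | ∃ a ∈ Tᶜ, ∃ b ∉ Tᶜ, A a b ∧ c a b = t} ≤ c x y :=
        csInf_le houtfin.bddBelow ⟨x, hxT, y, by simpa using hyT, hAxy, rfl⟩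
      obtain ⟨l, hl⟩ := hsc y x
      obtain ⟨a, b, hm, haT, hbT, hab⟩ := walk_cross (S := T) l y x hl hyT hxT
      have hinne : {t | ∃ a ∉ Tᶜ, ∃ b ∈ Tᶜ, A a b ∧ c a b = t}.Nonempty :=
        ⟨c a b, a, by simpa using haT, b, hbT, hab, rfl⟩
      obtain ⟨a', ha', b', hb', hab', hcab'⟩ := hinne.csInf_mem hinfin
      have ha'T : a' ∈ T := by simpa using ha'
      have hgt : ξ * c x y < c a' b' := by
        by_contra hle
        push_neg at hle
        exact hb' (Relation.ReflTransGen.tail ha'T ⟨hab', hle⟩)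
      have h2 : ξ * sInf {t | ∃ a ∈ Tᶜ, ∃ b ∉ Tᶜ, A a b ∧ c a b = t} ≤ ξ * c x y :=
        mul_le_mul_of_nonneg_left hout hξ0
      rw [hcab'] at hgt
      linarith
    obtain ⟨l, hw, hnd, hcheap⟩ := reach_nodup_walk hxT
    refine ⟨l, ⟨hAxy, hw, hnd⟩, ?_⟩
    intro f hf
    rcases List.mem_cons.mp hf with h | h
    · rw [h]; exact hcB
    · exact hcheap f h
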